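/- Let K be a profinite group with an open normal subgroup K' such that K' is pro-ℓ. Then, up to isomorphism, there are only finitely many simple continuous discrete ℤ_ℓ-torsion K-modules, and each occurs as a Jordan–Hölder factor of the induced module Ind_{K'}^{K}(ℤ/ℓℤ) (induction from the trivial K'-module ℤ/ℓℤ). -/

import Mathlib

/-- A continuous discrete `ℤ_ℓ`-torsion module over a topological group `K`:
a torsion abelian `ℓ`-group with a `K`-action for which every element has open
stabilizer. -/
structure DiscreteTorsionModule (ℓ : ℕ) (K : Type) [Group K] [TopologicalSpace K] where
  M : Type
  [addCommGroup : AddCommGroup M]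
  [action : DistribMulAction K M]
  torsion : ∀ m : M, ∃ n : ℕ, (ℓ ^ n : ℕ) • m = 0
  openStabilizers : ∀ m : M, IsOpen {g : K | g • m = m}

attribute [instance] DiscreteTorsionModule.addCommGroup DiscreteTorsionModule.action

/-- Simplicity of a continuous discrete torsion module: it is nonzero and has no
nontrivial proper `K`-stable subgroup. -/
def DiscreteTorsionModule.IsSimple {ℓ : ℕ} {K : Type} [Group K] [TopologicalSpace K]
    (X : DiscreteTorsionModule ℓ K) : Prop :=
  (∃ m : X.M, m ≠ 0) ∧
  ∀ A : AddSubgroup X.M, (∀ (g : K) (a : X.M), a ∈ A → g • a ∈ A) → A = ⊥ ∨ A = ⊤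

/-- Equivariant isomorphism of continuous discrete torsion modules. -/
def DiscreteTorsionModule.Iso {ℓ : ℕ} {K : Type} [Group K] [TopologicalSpace K]
    (X Y : DiscreteTorsionModule ℓ K) : Prop :=
  ∃ e : X.M ≃+ Y.M, ∀ (g : K) (m : X.M), e (g • m) = g • e m

/-- `X` occurs as a Jordan–Hölder factor (equivariant subquotient) of the induced module
`Ind_{K'}^K (ℤ/ℓℤ) = { f : K/K' → ℤ/ℓℤ }`, on which `K` acts by translations. -/
def OccursInInducedModule (ℓ : ℕ) (K : Type) [Group K] [TopologicalSpace K]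
    (K' : Subgroup K) [K'.Normal] (X : DiscreteTorsionModule ℓ K) : Prop :=
  ∃ (B : AddSubgroup ((K ⧸ K') → ZMod ℓ))
    (hB : ∀ (g : K) (f : (K ⧸ K') → ZMod ℓ), f ∈ B →
      (fun x => f ((QuotientGroup.mk g)⁻¹ * x)) ∈ B)
    (φ : B →+ X.M), Function.Surjective φ ∧
      ∀ (g : K) (f : (K ⧸ K') → ZMod ℓ) (hf : f ∈ B),
        φ ⟨fun x => f ((QuotientGroup.mk g)⁻¹ * x), hB g f hf⟩ = g • φ ⟨f, hf⟩

section Aux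

variable {ℓ : ℕ} {K : Type} [Group K] [TopologicalSpace K]

private lemma smul_nsmul_comm' (X : DiscreteTorsionModule ℓ K) (g : K) (n : ℕ) (m : X.M) :
    g • (n • m) = n • (g • m) :=
  (DistribMulAction.toAddMonoidHom X.M g).map_nsmul n m

/-- Every simple module is killed by `ℓ`. -/
private lemma DTM_ltorsion (hℓ : ℓ.Prime) (X : DiscreteTorsionModule ℓ K)
    (hX : X.IsSimple) : ∀ m : X.M, ℓ • m = 0 := by
  classical
  set A : AddSubgroup X.M :=
    { carrier := {m | ℓ • m = 0}
      zero_mem' := by simp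
      add_mem' := fun {a b} ha hb => by
        simp only [Set.mem_setOf_eq, smul_add] at *
        rw [ha, hb, add_zero]
      neg_mem' := fun {a} ha => by
        simp only [Set.mem_setOf_eq, smul_neg] at *
        rw [ha, neg_zero] } with hA
  have hmem : ∀ m : X.M, m ∈ A ↔ ℓ • m = 0 := fun m => Iff.rfl
  have hstable : ∀ (g : K) (a : X.M), a ∈ A → g • a ∈ A := by
    intro g a ha
    rw [hmem] at *
    rw [← smul_nsmul_comm' X g ℓ a, ha, smul_zero]
  obtain ⟨m₀, hm₀⟩ := hX.1
  have hex : ∃ n, ℓ ^ n • m₀ = 0 := X.torsion m₀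
  have hn₀ : ℓ ^ (Nat.find hex) • m₀ = 0 := Nat.find_spec hex
  have hn₀pos : Nat.find hex ≠ 0 := by
    intro h
    rw [h, pow_zero, one_smul] at hn₀
    exact hm₀ hn₀
  have key : (ℓ ^ (Nat.find hex - 1)) • m₀ ∈ A := by
    rw [hmem, smul_smul, ← pow_succ', Nat.sub_add_cancel (Nat.one_le_iff_ne_zero.mpr hn₀pos)]
    exact hn₀
  have keyne : (ℓ ^ (Nat.find hex - 1)) • m₀ ≠ 0 :=
    Nat.find_min hex (Nat.pred_lt hn₀pos)
  rcases hX.2 A hstable with h | h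
  · rw [h, AddSubgroup.mem_bot] at key
    exact absurd key keyne
  · intro m
    have : m ∈ A := h ▸ AddSubgroup.mem_top m
    exact (hmem m).mp this

/-- Every simple module is finite. -/
private lemma DTM_finite [IsTopologicalGroup K] [CompactSpace K] (hℓ : ℓ.Prime)
    (X : DiscreteTorsionModule ℓ K) (hX : X.IsSimple) : Finite X.M := by
  classical
  obtain ⟨m₀, hm₀⟩ := hX.1
  haveI : Module (ZMod ℓ) X.M := AddCommGroup.zmodModule (DTM_ltorsion hℓ X hX)
  have hstabopen : IsOpen ((MulAction.stabilizer K m₀ : Subgroup K) : Set K) :=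
    X.openStabilizers m₀
  haveI : Finite (K ⧸ MulAction.stabilizer K m₀) :=
    Subgroup.quotient_finite_of_isOpen _ hstabopen
  have horb : (MulAction.orbit K m₀).Finite := by
    rw [← Set.finite_coe_iff]
    exact Finite.of_equiv _ (MulAction.orbitEquivQuotientStabilizer K m₀).symm
  set N := Submodule.span (ZMod ℓ) (MulAction.orbit K m₀) with hN
  have hstable : ∀ (g : K) (a : X.M), a ∈ N.toAddSubgroup → g • a ∈ N.toAddSubgroup := by
    intro g a ha
    simp only [Submodule.mem_toAddSubgroup] at *
    refine Submodule.span_induction ?_ ?_ ?_ ?_ ha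
    · intro x hx
      obtain ⟨k, rfl⟩ := hx
      refine Submodule.subset_span ⟨g * k, ?_⟩
      show (g * k) • m₀ = g • (k • m₀)
      rw [mul_smul]
    · rw [smul_zero]; exact N.zero_mem
    · intro x y _ _ hx hy
      rw [smul_add]; exact N.add_mem hx hy
    · intro c x _ hx
      rw [show g • (c • x) = c • (g • x) from
        ZMod.map_smul (DistribMulAction.toAddMonoidHom X.M g) c x]
      exact N.smul_mem c hx
  have hspan : N = (⊤ : Submodule (ZMod ℓ) X.M) := by
    rcases hX.2 N.toAddSubgroup hstable with h | h
    · exfalso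
      have hm : m₀ ∈ N.toAddSubgroup :=
        (Submodule.mem_toAddSubgroup N).mpr (Submodule.subset_span (MulAction.mem_orbit_self m₀))
      rw [h, AddSubgroup.mem_bot] at hm
      exact hm₀ hm
    · refine Submodule.eq_top_iff'.mpr fun x => ?_
      have : x ∈ N.toAddSubgroup := h ▸ AddSubgroup.mem_top x
      exact (Submodule.mem_toAddSubgroup N).mp this
  rw [hN] at hspan
  haveI : Module.Finite (ZMod ℓ) X.M := ⟨Submodule.fg_def.mpr ⟨_, horb, hspan⟩⟩
  haveI : NeZero ℓ := ⟨hℓ.ne_zero⟩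
  exact Module.finite_of_finite (ZMod ℓ)

/-- The open normal pro-ℓ subgroup acts trivially on any simple module. -/
private lemma DTM_trivial [IsTopologicalGroup K] [CompactSpace K] (hℓ : ℓ.Prime)
    (K' : Subgroup K) [K'.Normal]
    (hproell : ∀ N : Subgroup ↥K', N.Normal → IsOpen (N : Set ↥K') →
      ∃ n : ℕ, Nat.card (↥K' ⧸ N) = ℓ ^ n)
    (X : DiscreteTorsionModule ℓ K) (hX : X.IsSimple) :
    ∀ g ∈ K', ∀ m : X.M, g • m = m := by
  classical
  haveI : Finite X.M := DTM_finite hℓ X hX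
  obtain ⟨m₀, hm₀⟩ := hX.1
  set A : AddSubgroup X.M :=
    { carrier := {m | ∀ g ∈ K', g • m = m}
      zero_mem' := fun g _ => smul_zero g
      add_mem' := fun {a b} ha hb g hg => by rw [smul_add, ha g hg, hb g hg]
      neg_mem' := fun {a} ha g hg => by rw [smul_neg, ha g hg] } with hAdef
  have hmemA : ∀ m : X.M, m ∈ A ↔ ∀ g ∈ K', g • m = m := fun m => Iff.rfl
  have hstable : ∀ (k : K) (a : X.M), a ∈ A → k • a ∈ A := by
    intro k a ha
    rw [hmemA] at *
    intro g hg
    have h1 : k⁻¹ * g * k ∈ K' := by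
      have := Subgroup.Normal.conj_mem ‹K'.Normal› g hg k⁻¹
      simpa using this
    have h2 : g * k = k * (k⁻¹ * g * k) := by group
    rw [← mul_smul, h2, mul_smul, ha _ h1]
  -- find a nonzero K'-fixed vector
  set ρ : ↥K' →* Equiv.Perm X.M := (MulAction.toPermHom K X.M).comp K'.subtype with hρ
  have hρapp : ∀ (g : ↥K') (m : X.M), ρ g m = (g : K) • m := fun g m => rfl
  have hker_mem : ∀ g : ↥K', g ∈ ρ.ker ↔ ∀ m : X.M, (g : K) • m = m := by
    intro g
    rw [MonoidHom.mem_ker]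
    constructor
    · intro h m
      rw [← hρapp, h]
      rfl
    · intro h
      ext m
      rw [hρapp]
      exact h m
  have hker_open : IsOpen ((ρ.ker : Set ↥K')) := by
    have hset : (ρ.ker : Set ↥K') = ⋂ m : X.M, (Subtype.val ⁻¹' {g : K | g • m = m}) := by
      ext g
      simp only [SetLike.mem_coe, Set.mem_iInter, Set.mem_preimage, Set.mem_setOf_eq]
      exact hker_mem g
    rw [hset]
    exact isOpen_iInter_of_finite fun m =>
      (X.openStabilizers m).preimage continuous_subtype_val
  obtain ⟨n, hn⟩ := hproell ρ.ker (MonoidHom.normal_ker ρ) hker_open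
  have hcard : Nat.card ρ.range = ℓ ^ n := by
    rw [← hn]
    exact (Nat.card_congr (QuotientGroup.quotientKerEquivRange ρ).toEquiv).symm
  have hP : IsPGroup ℓ ρ.range := IsPGroup.of_card hcard
  haveI : Module (ZMod ℓ) X.M := AddCommGroup.zmodModule (DTM_ltorsion hℓ X hX)
  haveI : Fact ℓ.Prime := ⟨hℓ⟩
  haveI : Fintype X.M := Fintype.ofFinite _
  haveI : Nontrivial X.M := ⟨m₀, 0, hm₀⟩
  have hcardM : Nat.card X.M = ℓ ^ (Module.finrank (ZMod ℓ) X.M) := by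
    rw [Nat.card_eq_fintype_card, Module.card_eq_pow_finrank (K := ZMod ℓ), ZMod.card]
  haveI : NoZeroSMulDivisors (ZMod ℓ) X.M := by
    constructor
    intro c x hcx
    by_cases hc : c = 0
    · exact Or.inl hc
    · refine Or.inr ?_
      have := congrArg (fun y => c⁻¹ • y) hcx
      simpa [smul_smul, inv_mul_cancel₀ hc] using this
  have hrankpos : 0 < Module.finrank (ZMod ℓ) X.M :=
    Module.finrank_pos (R := ZMod ℓ) (M := X.M)
  have hdvd : ℓ ∣ Nat.card X.M := hcardM ▸ dvd_pow_self ℓ hrankpos.ne'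
  have hmod := hP.card_modEq_card_fixedPoints X.M
  have hdvd2 : ℓ ∣ Nat.card (MulAction.fixedPoints ρ.range X.M) :=
    (Nat.modEq_zero_iff_dvd).mp (hmod.symm.trans (Nat.modEq_zero_iff_dvd.mpr hdvd))
  have hsmul_eq : ∀ (σ : ρ.range) (m : X.M), ∀ g : ↥K', ρ g = σ → σ • m = (g : K) • m := by
    intro σ m g hg
    show (σ : Equiv.Perm X.M) • m = _
    rw [← hg]
    rfl
  have hfix_iff : ∀ m : X.M,
      m ∈ MulAction.fixedPoints ρ.range X.M ↔ ∀ g : ↥K', (g : K) • m = m := by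
    intro m
    constructor
    · intro h g
      have := h ⟨ρ g, ⟨g, rfl⟩⟩
      rwa [hsmul_eq ⟨ρ g, ⟨g, rfl⟩⟩ m g rfl] at this
    · intro h σ
      obtain ⟨g, hg⟩ := σ.2
      show σ • m = m
      rw [hsmul_eq σ m g hg]
      exact h g
  have h0 : (0 : X.M) ∈ MulAction.fixedPoints ρ.range X.M :=
    (hfix_iff 0).mpr fun g => smul_zero _
  haveI : Nonempty (MulAction.fixedPoints ρ.range X.M) := ⟨⟨0, h0⟩⟩
  haveI : Finite (MulAction.fixedPoints ρ.range X.M) := Subtype.finite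
  have hpos : 0 < Nat.card (MulAction.fixedPoints ρ.range X.M) := Nat.card_pos
  have hge : 1 < Nat.card (MulAction.fixedPoints ρ.range X.M) :=
    lt_of_lt_of_le hℓ.one_lt (Nat.le_of_dvd hpos hdvd2)
  haveI hnt : Nontrivial (MulAction.fixedPoints ρ.range X.M) :=
    Finite.one_lt_card_iff_nontrivial.mp hge
  obtain ⟨x, y, hxy⟩ := hnt.exists_pair_ne
  have hfixne : ∃ m : X.M, m ≠ 0 ∧ m ∈ MulAction.fixedPoints ρ.range X.M := by
    by_cases hx : (x : X.M) = 0
    · refine ⟨(y : X.M), ?_, y.2⟩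
      intro hy
      exact hxy (Subtype.ext (by rw [hx, hy]))
    · exact ⟨(x : X.M), hx, x.2⟩
  obtain ⟨m₁, hm₁ne, hm₁fix⟩ := hfixne
  have hm₁A : m₁ ∈ A := by
    rw [hmemA]
    intro g hg
    exact (hfix_iff m₁).mp hm₁fix ⟨g, hg⟩
  rcases hX.2 A hstable with h | h
  · rw [h, AddSubgroup.mem_bot] at hm₁A
    exact absurd hm₁A hm₁ne
  · intro g hg m
    have : m ∈ A := h ▸ AddSubgroup.mem_top m
    exact (hmemA m).mp this g hg

/-- The key surjection from the induced module onto any simple module. -/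
private lemma DTM_surj [IsTopologicalGroup K] [CompactSpace K] (hℓ : ℓ.Prime)
    (K' : Subgroup K) [K'.Normal] (hopen : IsOpen (K' : Set K))
    (hproell : ∀ N : Subgroup ↥K', N.Normal → IsOpen (N : Set ↥K') →
      ∃ n : ℕ, Nat.card (↥K' ⧸ N) = ℓ ^ n)
    (X : DiscreteTorsionModule ℓ K) (hX : X.IsSimple) :
    ∃ φ : ((K ⧸ K') → ZMod ℓ) →+ X.M, Function.Surjective φ ∧
      ∀ (g : K) (f : (K ⧸ K') → ZMod ℓ),
        φ (fun x => f ((QuotientGroup.mk g)⁻¹ * x)) = g • φ f := by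
  classical
  haveI : Finite (K ⧸ K') := Subgroup.quotient_finite_of_isOpen K' hopen
  haveI : Fintype (K ⧸ K') := Fintype.ofFinite _
  haveI : Module (ZMod ℓ) X.M := AddCommGroup.zmodModule (DTM_ltorsion hℓ X hX)
  have htriv := DTM_trivial hℓ K' hproell X hX
  obtain ⟨m₀, hm₀⟩ := hX.1
  have hcoh : ∀ a b : K, (QuotientGroup.mk a : K ⧸ K') = QuotientGroup.mk b →
      ∀ m : X.M, a • m = b • m := by
    intro a b hab m
    have h1 : a⁻¹ * b ∈ K' := QuotientGroup.eq.mp hab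
    have h2 : b⁻¹ * a ∈ K' := by
      have := K'.inv_mem h1
      simpa using this
    calc a • m = (b * (b⁻¹ * a)) • m := by rw [mul_inv_cancel_left]
    _ = b • ((b⁻¹ * a) • m) := mul_smul _ _ _
    _ = b • m := by rw [htriv _ h2]
  set φ : ((K ⧸ K') → ZMod ℓ) →+ X.M :=
    { toFun := fun f => ∑ x : K ⧸ K', f x • ((Quotient.out x : K) • m₀)
      map_zero' := by simp
      map_add' := by
        intro f₁ f₂
        simp [add_smul, Finset.sum_add_distrib] } with hφdef
  have hφ : ∀ f, φ f = ∑ x : K ⧸ K', f x • ((Quotient.out x : K) • m₀) := fun _ => rfl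
  have hequi : ∀ (g : K) (f : (K ⧸ K') → ZMod ℓ),
      φ (fun x => f ((QuotientGroup.mk g)⁻¹ * x)) = g • φ f := by
    intro g f
    rw [hφ, hφ]
    rw [show g • ∑ x : K ⧸ K', f x • ((Quotient.out x : K) • m₀)
        = ∑ x : K ⧸ K', g • (f x • ((Quotient.out x : K) • m₀)) from
      map_sum (DistribMulAction.toAddMonoidHom X.M g) _ _]
    refine (Fintype.sum_equiv (Equiv.mulLeft (QuotientGroup.mk g : K ⧸ K')) _ _ ?_).symm
    intro y
    simp only [Equiv.coe_mulLeft]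
    rw [show g • (f y • ((Quotient.out y : K) • m₀))
        = f y • (g • ((Quotient.out y : K) • m₀)) from
      ZMod.map_smul (DistribMulAction.toAddMonoidHom X.M g) _ _]
    rw [inv_mul_cancel_left]
    congr 1
    rw [← mul_smul]
    refine hcoh _ _ ?_ m₀
    rw [QuotientGroup.mk_mul, QuotientGroup.out_eq', QuotientGroup.out_eq']
  have hrangestable : ∀ (g : K) (a : X.M), a ∈ φ.range → g • a ∈ φ.range := by
    rintro g a ⟨f, rfl⟩
    exact ⟨fun x => f ((QuotientGroup.mk g)⁻¹ * x), hequi g f⟩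
  have hm₀mem : m₀ ∈ φ.range := by
    refine ⟨Pi.single (1 : K ⧸ K') 1, ?_⟩
    rw [hφ, Finset.sum_eq_single (1 : K ⧸ K')]
    · rw [Pi.single_eq_same, one_smul]
      refine (hcoh _ 1 (by simp [QuotientGroup.out_eq']) m₀).trans (one_smul _ m₀)
    · intro b _ hb
      rw [Pi.single_eq_of_ne hb, zero_smul]
    · intro h
      exact absurd (Finset.mem_univ _) h
  rcases hX.2 φ.range hrangestable with h | h
  · rw [h, AddSubgroup.mem_bot] at hm₀mem
    exact absurd hm₀mem hm₀
  · refine ⟨φ, ?_, hequi⟩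
    intro m
    have : m ∈ φ.range := h ▸ AddSubgroup.mem_top m
    exact this

variable (ℓ K) in
/-- Translation action of `K` on functions `K⧸K' → ZMod ℓ`, as a monoid hom to endomorphisms. -/
private def transHom (K' : Subgroup K) [K'.Normal] :
    K →* AddMonoid.End ((K ⧸ K') → ZMod ℓ) where
  toFun g :=
    { toFun := fun f x => f ((QuotientGroup.mk g)⁻¹ * x)
      map_zero' := rfl
      map_add' := fun _ _ => rfl }
  map_one' := by
    refine AddMonoidHom.ext fun f => funext fun x => ?_
    show f ((QuotientGroup.mk (1 : K))⁻¹ * x) = (1 : AddMonoid.End ((K ⧸ K') → ZMod ℓ)) f x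
    have h1 : (QuotientGroup.mk (1 : K) : K ⧸ K') = 1 := QuotientGroup.mk_one K'
    rw [h1, inv_one, one_mul]
    rfl
  map_mul' g h := by
    refine AddMonoidHom.ext fun f => funext fun x => ?_
    show f ((QuotientGroup.mk (g * h))⁻¹ * x)
      = f ((QuotientGroup.mk h)⁻¹ * ((QuotientGroup.mk g)⁻¹ * x))
    rw [QuotientGroup.mk_mul, mul_inv_rev, mul_assoc]

variable (ℓ K) in
/-- The translation action descends to the quotient by a stable subgroup. -/
private def transBar (K' : Subgroup K) [K'.Normal]
    (A : AddSubgroup ((K ⧸ K') → ZMod ℓ))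
    (hA : ∀ (g : K) (f : (K ⧸ K') → ZMod ℓ), f ∈ A →
      (fun x => f ((QuotientGroup.mk g)⁻¹ * x)) ∈ A) :
    K →* AddMonoid.End (((K ⧸ K') → ZMod ℓ) ⧸ A) where
  toFun g := QuotientAddGroup.map A A (transHom ℓ K K' g) (fun f hf => hA g f hf)
  map_one' := AddMonoidHom.ext fun m => QuotientAddGroup.induction_on m fun f => by
    show QuotientAddGroup.mk (transHom ℓ K K' 1 f) = _
    rw [map_one (transHom ℓ K K')]
    rfl
  map_mul' g h := AddMonoidHom.ext fun m => QuotientAddGroup.induction_on m fun f => by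
    show QuotientAddGroup.mk (transHom ℓ K K' (g * h) f)
      = QuotientAddGroup.mk (transHom ℓ K K' g (transHom ℓ K K' h f))
    rw [map_mul (transHom ℓ K K')]
    rfl

variable (ℓ K) in
/-- The quotient of the induced module by a stable subgroup, as a discrete torsion module. -/
private def repOf [IsTopologicalGroup K] (K' : Subgroup K) [K'.Normal]
    (hopen : IsOpen (K' : Set K))
    (A : AddSubgroup ((K ⧸ K') → ZMod ℓ))
    (hA : ∀ (g : K) (f : (K ⧸ K') → ZMod ℓ), f ∈ A →
      (fun x => f ((QuotientGroup.mk g)⁻¹ * x)) ∈ A) :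
    DiscreteTorsionModule ℓ K :=
  letI act : DistribMulAction K (((K ⧸ K') → ZMod ℓ) ⧸ A) :=
    DistribMulAction.compHom _ (transBar ℓ K K' A hA)
  { M := ((K ⧸ K') → ZMod ℓ) ⧸ A
    addCommGroup := inferInstance
    action := act
    torsion := fun m => ⟨1, by
      refine QuotientAddGroup.induction_on m fun f => ?_
      have h2 : ((ℓ ^ 1 : ℕ) • f) = 0 := by
        funext x
        simp [nsmul_eq_mul, ZMod.natCast_self]
      calc (ℓ ^ 1 : ℕ) • (QuotientAddGroup.mk f : ((K ⧸ K') → ZMod ℓ) ⧸ A)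
          = QuotientAddGroup.mk ((ℓ ^ 1 : ℕ) • f) :=
            ((QuotientAddGroup.mk' A).map_nsmul (ℓ ^ 1) f).symm
      _ = 0 := by rw [h2]; rfl⟩
    openStabilizers := fun m => by
      have hset : {g : K | g • m = m} = ((MulAction.stabilizer K m : Subgroup K) : Set K) := by
        ext g
        simp [MulAction.mem_stabilizer_iff]
      rw [hset]
      refine Subgroup.isOpen_mono (H₁ := K') ?_ hopen
      intro g hg
      rw [MulAction.mem_stabilizer_iff]
      refine QuotientAddGroup.induction_on m fun f => ?_
      have hmapmk : (g • (QuotientAddGroup.mk f : ((K ⧸ K') → ZMod ℓ) ⧸ A))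
          = QuotientAddGroup.mk (fun x => f ((QuotientGroup.mk g)⁻¹ * x)) :=
        QuotientAddGroup.map_mk A A (transHom ℓ K K' g) (fun f' hf' => hA g f' hf') f
      rw [hmapmk]
      congr 1
      funext x
      show f ((QuotientGroup.mk g)⁻¹ * x) = f x
      rw [(QuotientGroup.eq_one_iff g).mpr hg, inv_one, one_mul] }

end Aux

/-- Let `K` be a profinite group with an open normal subgroup `K'` which is pro-`ℓ`.
Then, up to equivariant isomorphism, there are only finitely many simple continuous
discrete `ℤ_ℓ`-torsion `K`-modules, and each of them occurs as a Jordan–Hölder factor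
of the induced module `Ind_{K'}^K (ℤ/ℓℤ)` (induction of the trivial `K'`-module). -/
theorem finitely_many_simple_torsion_modules
    (ℓ : ℕ) (hℓ : ℓ.Prime)
    (K : Type) [Group K] [TopologicalSpace K] [IsTopologicalGroup K]
    [CompactSpace K] [TotallyDisconnectedSpace K]
    (K' : Subgroup K) [K'.Normal] (hopen : IsOpen (K' : Set K))
    (hproell : ∀ N : Subgroup ↥K', N.Normal → IsOpen (N : Set ↥K') →
      ∃ n : ℕ, Nat.card (↥K' ⧸ N) = ℓ ^ n) :
    (∃ (n : ℕ) (Rep : Fin n → DiscreteTorsionModule ℓ K),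
      ∀ X : DiscreteTorsionModule ℓ K, X.IsSimple → ∃ i, X.Iso (Rep i)) ∧
    (∀ X : DiscreteTorsionModule ℓ K, X.IsSimple → OccursInInducedModule ℓ K K' X) := by
  classical
  haveI : Finite (K ⧸ K') := Subgroup.quotient_finite_of_isOpen K' hopen
  haveI : NeZero ℓ := ⟨hℓ.ne_zero⟩
  constructor
  · -- finitely many simple modules
    haveI : Finite (AddSubgroup ((K ⧸ K') → ZMod ℓ)) :=
      Finite.of_injective (fun A => (A : Set ((K ⧸ K') → ZMod ℓ))) SetLike.coe_injective
    set S := {A : AddSubgroup ((K ⧸ K') → ZMod ℓ) //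
      ∀ (g : K) (f : (K ⧸ K') → ZMod ℓ), f ∈ A →
        (fun x => f ((QuotientGroup.mk g)⁻¹ * x)) ∈ A} with hS
    haveI : Finite S := Subtype.finite
    obtain ⟨n, ⟨eS⟩⟩ := Finite.exists_equiv_fin S
    set Rep' : S → DiscreteTorsionModule ℓ K := fun s => repOf ℓ K K' hopen s.1 s.2 with hRep'
    refine ⟨n, fun i => Rep' (eS.symm i), ?_⟩
    intro X hX
    obtain ⟨φ, hsurj, hequi⟩ := DTM_surj hℓ K' hopen hproell X hX
    have hkerstable : ∀ (g : K) (f : (K ⧸ K') → ZMod ℓ), f ∈ φ.ker →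
        (fun x => f ((QuotientGroup.mk g)⁻¹ * x)) ∈ φ.ker := by
      intro g f hf
      rw [AddMonoidHom.mem_ker] at *
      rw [hequi g f, hf, smul_zero]
    refine ⟨eS ⟨φ.ker, hkerstable⟩, ?_⟩
    show X.Iso (Rep' (eS.symm (eS ⟨φ.ker, hkerstable⟩)))
    have hrw : eS.symm (eS ⟨φ.ker, hkerstable⟩) = ⟨φ.ker, hkerstable⟩ :=
      eS.symm_apply_apply _
    rw [hrw]
    show X.Iso (repOf ℓ K K' hopen φ.ker hkerstable)
    set e := QuotientAddGroup.quotientKerEquivOfSurjective φ hsurj with he_def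
    have he : ∀ f, e (QuotientAddGroup.mk f) = φ f := fun f => rfl
    have hequiv : ∀ (g : K) (m : X.M),
        e.symm (g • m) = (transBar ℓ K K' φ.ker hkerstable g) (e.symm m) := by
      intro g m
      obtain ⟨f, rfl⟩ := hsurj m
      have h1 : e.symm (φ f) = QuotientAddGroup.mk f := by
        rw [← he]
        exact e.symm_apply_apply _
      have h2 : e.symm (φ (fun x => f ((QuotientGroup.mk g)⁻¹ * x)))
          = QuotientAddGroup.mk (fun x => f ((QuotientGroup.mk g)⁻¹ * x)) := by
        rw [← he]
        exact e.symm_apply_apply _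
      rw [← hequi g f, h2, h1]
      exact (QuotientAddGroup.map_mk φ.ker φ.ker (transHom ℓ K K' g)
        (fun f' hf' => hkerstable g f' hf') f).symm
    exact ⟨e.symm, hequiv⟩
  · -- every simple module occurs in the induced module
    intro X hX
    obtain ⟨φ, hsurj, hequi⟩ := DTM_surj hℓ K' hopen hproell X hX
    refine ⟨⊤, fun g f _ => AddSubgroup.mem_top _,
      φ.comp (AddSubgroup.subtype ⊤), ?_, ?_⟩
    · intro m
      obtain ⟨f, hf⟩ := hsurj m
      exact ⟨⟨f, AddSubgroup.mem_top _⟩, hf⟩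
    · intro g f hf
      exact hequi g f
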